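/- For integers m ≥ 0 and n₁, n₂ ≥ 1 with m ≥ n₁ + n₂ - 1, the sum C_m(n₁,n₂) = ∑_{a=0}^{m} (-1)^{m-a} H_a(n₁) H_{m-a}(n₂) equals 0, where H_0(n)=1 and H_r(n) = ∑_{0<m₁<⋯<m_r<n} 1/(m₁⋯m_r). -/

import Mathlib

/-- `H_r(n) = ∑_{0<m₁<⋯<m_r<n} 1/(m₁⋯m_r)`, with `H_0(n) = 1`. -/
noncomputable def Hh (r n : ℕ) : ℚ :=
  ∑ s ∈ Finset.powersetCard r (Finset.Icc 1 (n - 1)), ∏ m ∈ s, 1 / (m : ℚ)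

lemma Hh_eq_zero {r n : ℕ} (h0 : 1 ≤ n) (h : n ≤ r) : Hh r n = 0 := by
  unfold Hh
  rw [Finset.powersetCard_eq_empty.mpr (by rw [Nat.card_Icc]; omega), Finset.sum_empty]

theorem C_vanishing (m n₁ n₂ : ℕ) (h₁ : 1 ≤ n₁) (h₂ : 1 ≤ n₂)
    (hm : n₁ + n₂ - 1 ≤ m) :
    (∑ a ∈ Finset.range (m + 1), (-1 : ℚ) ^ (m - a) * Hh a n₁ * Hh (m - a) n₂) = 0 := by
  apply Finset.sum_eq_zero
  intro a ha
  rcases le_or_gt n₁ a with h | h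
  · rw [Hh_eq_zero h₁ h, mul_zero, zero_mul]
  · rw [Hh_eq_zero h₂ (show n₂ ≤ m - a by omega), mul_zero]
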